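/- Let b ≥ 2 be an integer. If N is a b-smooth positive integer (all prime factors of N are at most b) and M is a positive integer with M ≤ N, then there exists a positive divisor p of N satisfying M/√b ≤ p < √b · M. -/
import Mathlib


open Real

theorem smooth_divisor_exists (b N M : ℕ) (hb : 2 ≤ b) (hN : 0 < N)
    (hsmooth : ∀ r : ℕ, r.Prime → r ∣ N → r ≤ b)
    (hM : 0 < M) (hMN : M ≤ N) :
    ∃ p : ℕ, p ∣ N ∧ 0 < p ∧
      (M : ℝ) / Real.sqrt b ≤ p ∧ (p : ℝ) < Real.sqrt b * M := by
  have hb0 : (0:ℝ) < b := by positivity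
  have hsb : (1:ℝ) < Real.sqrt b := by
    rw [show (1:ℝ) = Real.sqrt 1 by simp]
    apply Real.sqrt_lt_sqrt (by norm_num)
    exact_mod_cast hb
  have hsb0 : (0:ℝ) < Real.sqrt b := by linarith
  have hsq : Real.sqrt b * Real.sqrt b = b := Real.mul_self_sqrt hb0.le
  classical
  set S := N.divisors.filter (fun p : ℕ => (p:ℝ) < Real.sqrt b * M) with hS
  have h1 : 1 ∈ S := by
    rw [hS, Finset.mem_filter, Nat.mem_divisors]
    refine ⟨⟨one_dvd _, hN.ne'⟩, ?_⟩
    have : (1:ℝ) ≤ M := by exact_mod_cast hM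
    push_cast
    nlinarith
  have hne : S.Nonempty := ⟨1, h1⟩
  set p := S.max' hne with hp
  have hpS : p ∈ S := S.max'_mem hne
  rw [hS, Finset.mem_filter, Nat.mem_divisors] at hpS
  obtain ⟨⟨hpd, _⟩, hplt⟩ := hpS
  have hp0 : 0 < p := Nat.pos_of_dvd_of_pos hpd hN
  refine ⟨p, hpd, hp0, ?_, hplt⟩
  by_contra hcon
  push_neg at hcon
  -- p < M / √b
  have hpM : p < M := by
    have : (p:ℝ) < M := by
      have h1 : (M:ℝ) / Real.sqrt b ≤ M := by
        rw [div_le_iff₀ hsb0]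
        have hM' : (0:ℝ) < M := by exact_mod_cast hM
        nlinarith
      linarith
    exact_mod_cast this
  have hpN : p ≠ N := by omega
  obtain ⟨k, hk⟩ := hpd
  have hk1 : 1 < k := by
    rcases Nat.lt_or_ge k 2 with h | h
    · interval_cases k <;> omega
    · omega
  set q := k.minFac with hq
  have hqp : q.Prime := Nat.minFac_prime (by omega)
  have hqk : q ∣ k := Nat.minFac_dvd k
  have hpqN : p * q ∣ N := by
    obtain ⟨m, hm⟩ := hqk
    exact ⟨m, by rw [hk, hm]; ring⟩
  have hqb : q ≤ b := hsmooth q hqp (dvd_trans (dvd_mul_left q p) hpqN)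
  -- p*q < √b * M
  have hpq_lt : ((p*q : ℕ):ℝ) < Real.sqrt b * M := by
    push_cast
    have h1 : (p:ℝ) * q ≤ p * b := by
      have : (q:ℝ) ≤ b := by exact_mod_cast hqb
      have : (0:ℝ) ≤ p := by positivity
      nlinarith
    have h2 : (p:ℝ) * b < (M / Real.sqrt b) * b := by
      apply mul_lt_mul_of_pos_right hcon hb0
    have h3 : (M:ℝ) / Real.sqrt b * b = Real.sqrt b * M := by
      field_simp
      nlinarith
    linarith
  have hmem : p * q ∈ S := by
    rw [hS, Finset.mem_filter, Nat.mem_divisors]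
    exact ⟨⟨hpqN, hN.ne'⟩, hpq_lt⟩
  have hle : p * q ≤ p := S.le_max' _ hmem
  have : 2 ≤ q := hqp.two_le
  nlinarith
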